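/- For every x ∈ (0,∞) the limit M(x) = lim_{k→∞} M_{k,k}(x) exists as a positive real number, and the resulting Mina margin map M : (0,∞) → (0,∞) satisfies M(s(x)) = M(x) for every x ∈ (0,∞). -/

import Mathlib

/-- `ω(x) = √(8x+1)`. -/
noncomputable def wF (x : ℝ) : ℝ := Real.sqrt (8 * x + 1)

/-- `c(x) = (ω+3)²/16`. -/
noncomputable def cF (x : ℝ) : ℝ := (wF x + 3) ^ 2 / 16

/-- `d(x) = (ω+3)²/(8(ω+1))`. -/
noncomputable def dF (x : ℝ) : ℝ := (wF x + 3) ^ 2 / (8 * (wF x + 1))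

/-- `s(x) = (ω−1)²/(4(ω+7))`. -/
noncomputable def sF (x : ℝ) : ℝ := (wF x - 1) ^ 2 / (4 * (wF x + 7))

/-- `s₋₁(x) = 1/s(1/x)`, the inverse of `s`. -/
noncomputable def sFinv (x : ℝ) : ℝ := 1 / sF (1 / x)

/-- The ℤ-indexed iterates of `s`. -/
noncomputable def sIter (k : ℤ) (x : ℝ) : ℝ :=
  if 0 ≤ k then sF^[k.toNat] x else sFinv^[(-k).toNat] x

/-- `P₀ = 1` and `P_{k+1} − P_k = ∏_{i=0}^{k} (c_i(x) − 1)`. -/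
noncomputable def Pfun (x : ℝ) : ℕ → ℝ
  | 0 => 1
  | k + 1 => Pfun x k + ∏ i ∈ Finset.range (k + 1), (cF (sIter i x) - 1)

/-- `S₀ = 1` and `S_{k+1} − S_k = ∏_{i=0}^{k} (d_i(x) − 1)`. -/
noncomputable def Sfun (x : ℝ) : ℕ → ℝ
  | 0 => 1
  | k + 1 => Sfun x k + ∏ i ∈ Finset.range (k + 1), (dF (sIter i x) - 1)

/-- `Q₁ = 0` and `Q_{k+1} − Q_k = ∏_{i=1}^{k} (c_{−i}(x) − 1)⁻¹` for `k ≥ 1`. -/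
noncomputable def Qfun (x : ℝ) : ℕ → ℝ
  | 0 => 0
  | 1 => 0
  | k + 2 => Qfun x (k + 1) + ∏ i ∈ Finset.range (k + 1), (cF (sIter (-((i : ℤ) + 1)) x) - 1)⁻¹

/-- `T₁ = 0` and `T_{k+1} − T_k = ∏_{i=1}^{k} (d_{−i}(x) − 1)⁻¹` for `k ≥ 1`. -/
noncomputable def Tfun (x : ℝ) : ℕ → ℝ
  | 0 => 0
  | 1 => 0
  | k + 2 => Tfun x (k + 1) + ∏ i ∈ Finset.range (k + 1), (dF (sIter (-((i : ℤ) + 1)) x) - 1)⁻¹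

/-- The finite-trail Mina margin map `M_{ℓ,k}(x) = x(S_k + T_ℓ)/(P_k + Q_ℓ)`. -/
noncomputable def Mfin (l k : ℕ) (x : ℝ) : ℝ :=
  x * (Sfun x k + Tfun x l) / (Pfun x k + Qfun x l)

lemma wF_gt {x : ℝ} (hx : 0 < x) : 1 < wF x := by
  have : (1:ℝ) < 8 * x + 1 := by linarith
  have h := Real.lt_sqrt (x := 1) (y := 8 * x + 1) (by norm_num)
  rw [wF]; rw [h]; nlinarith

lemma wF_sq {x : ℝ} (hx : 0 < x) : (wF x) ^ 2 = 8 * x + 1 :=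
  Real.sq_sqrt (by linarith)

lemma cF_sub_one {x : ℝ} : cF x - 1 = (wF x + 7) * (wF x - 1) / 16 := by
  rw [cF]; ring

lemma cF_sub_one_pos {x : ℝ} (hx : 0 < x) : 0 < cF x - 1 := by
  have h : 0 < wF x - 1 := by linarith [wF_gt hx]
  rw [cF_sub_one]
  apply div_pos (by nlinarith) (by norm_num)

lemma dF_sub_one {x : ℝ} (hx : 0 < x) : dF x - 1 = (wF x - 1) ^ 2 / (8 * (wF x + 1)) := by
  have h : 0 < wF x - 1 := by linarith [wF_gt hx]
  have h2 : (0:ℝ) < 8 * (wF x + 1) := by linarith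
  rw [dF, div_sub' (ne_of_gt h2), div_eq_div_iff (ne_of_gt h2) (ne_of_gt h2)]
  ring

lemma dF_sub_one_pos {x : ℝ} (hx : 0 < x) : 0 < dF x - 1 := by
  have h : 0 < wF x - 1 := by linarith [wF_gt hx]
  have h2 : (0:ℝ) < wF x + 1 := by linarith
  rw [dF_sub_one hx]; positivity

lemma sF_pos {x : ℝ} (hx : 0 < x) : 0 < sF x := by
  have h : 0 < wF x - 1 := by linarith [wF_gt hx]
  have h2 : (0:ℝ) < wF x + 7 := by linarith
  rw [sF]; positivity

lemma sF_le {x : ℝ} (hx : 0 < x) : sF x ≤ x / 8 := by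
  have h : 0 < wF x - 1 := by linarith [wF_gt hx]
  have hs := wF_sq hx
  rw [sF, div_le_div_iff₀ (by nlinarith) (by norm_num)]
  nlinarith [sq_nonneg (wF x - 4), sq_nonneg (wF x - 1)]

lemma sFinv_pos {x : ℝ} (hx : 0 < x) : 0 < sFinv x := by
  rw [sFinv]; have := sF_pos (show (0:ℝ) < 1/x by positivity); positivity

lemma sFinv_ge {x : ℝ} (hx : 0 < x) : 8 * x ≤ sFinv x := by
  have h1 : (0:ℝ) < 1 / x := by positivity
  have h2 := sF_le h1
  have h3 := sF_pos h1
  rw [sFinv, le_div_iff₀ h3]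
  calc 8 * x * sF (1/x) ≤ 8 * x * (1/x/8) := by nlinarith
    _ = 1 := by field_simp

lemma cF_le_half {x : ℝ} (hx : 0 < x) (hx5 : x ≤ 1/5) : cF x - 1 ≤ 1/2 := by
  have h := wF_gt hx; have hs := wF_sq hx
  have hw2 : wF x ≤ 2 := by nlinarith
  rw [cF_sub_one]; nlinarith

lemma dF_le_half {x : ℝ} (hx : 0 < x) (hx5 : x ≤ 1/5) : dF x - 1 ≤ 1/2 := by
  have h := wF_gt hx; have hs := wF_sq hx
  have hw2 : wF x ≤ 2 := by nlinarith
  rw [dF_sub_one hx, div_le_iff₀ (by positivity)]; nlinarith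

lemma cF_ge_two {x : ℝ} (hx : 4 ≤ x) : 2 ≤ cF x - 1 := by
  have hx0 : (0:ℝ) < x := by linarith
  have h := wF_gt hx0; have hs := wF_sq hx0
  rw [cF_sub_one]; nlinarith

lemma dF_ge_two {x : ℝ} (hx : 45 ≤ x) : 2 ≤ dF x - 1 := by
  have hx0 : (0:ℝ) < x := by linarith
  have h := wF_gt hx0; have hs := wF_sq hx0
  have hw : 19 ≤ wF x := by nlinarith
  rw [dF_sub_one hx0, le_div_iff₀ (by positivity)]; nlinarith

lemma sFinv_sF {x : ℝ} (hx : 0 < x) : sFinv (sF x) = x := by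
  have h : 0 < wF x - 1 := by linarith [wF_gt hx]
  have hs := wF_sq hx
  have hsp := sF_pos hx
  have hx' : x = ((wF x) ^ 2 - 1) / 8 := by linarith
  have h1 : 1 / sF x = 4 * (wF x + 7) / (wF x - 1) ^ 2 := by
    rw [sF, one_div_div]
  have h2 : wF (1 / sF x) = (wF x + 15) / (wF x - 1) := by
    have e : 8 * (1 / sF x) + 1 = ((wF x + 15) / (wF x - 1)) ^ 2 := by
      rw [h1]; field_simp; ring
    rw [wF, e]
    exact Real.sqrt_sq (div_nonneg (by linarith) (by linarith))
  have key : sF (1 / sF x) = 1 / x := by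
    have hne : wF x - 1 ≠ 0 := ne_of_gt h
    have hne2 : wF x + 1 ≠ 0 := by nlinarith
    have hne3 : (wF x) ^ 2 - 1 ≠ 0 := by nlinarith
    have hxne : x ≠ 0 := ne_of_gt hx
    rw [sF, h2, show (1:ℝ)/x = 8/((wF x)^2 - 1) by rw [hs]; field_simp; ring]
    have hpos : 0 < (wF x - 1) ^ 2 * (wF x + 1) := mul_pos (pow_pos h 2) (by linarith)
    have hD : (32 + (-(wF x * 32) - wF x ^ 2 * 32) + wF x ^ 3 * 32) ≠ 0 :=
      ne_of_gt (by nlinarith)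
    rw [div_eq_div_iff (mul_pos (by norm_num) (add_pos (div_pos (by linarith) h) (by norm_num))).ne' hne3]
    field_simp
    ring
  rw [sFinv, key, one_div_one_div]

open Filter Finset


/-- forward trail products -/
noncomputable def fc (x : ℝ) (j : ℕ) : ℝ := ∏ i ∈ Finset.range (j + 1), (cF (sIter i x) - 1)
noncomputable def fd (x : ℝ) (j : ℕ) : ℝ := ∏ i ∈ Finset.range (j + 1), (dF (sIter i x) - 1)
noncomputable def gc (x : ℝ) (j : ℕ) : ℝ :=
  ∏ i ∈ Finset.range (j + 1), (cF (sIter (-((i : ℤ) + 1)) x) - 1)⁻¹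
noncomputable def gd (x : ℝ) (j : ℕ) : ℝ :=
  ∏ i ∈ Finset.range (j + 1), (dF (sIter (-((i : ℤ) + 1)) x) - 1)⁻¹

lemma sIter_natCast (x : ℝ) (i : ℕ) : sIter (i : ℤ) x = sF^[i] x := by
  rw [sIter, if_pos (Int.natCast_nonneg i)]; simp

lemma sIter_neg (x : ℝ) (n : ℕ) : sIter (-(n : ℤ)) x = sFinv^[n] x := by
  rcases Nat.eq_zero_or_pos n with h | h
  · subst h; simp [sIter]
  · rw [sIter, if_neg (by omega)]; congr 1; omega

lemma sF_iter_pos {x : ℝ} (hx : 0 < x) (n : ℕ) : 0 < sF^[n] x := by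
  induction n with
  | zero => simpa using hx
  | succ n ih => rw [Function.iterate_succ_apply']; exact sF_pos ih

lemma sF_iter_le {x : ℝ} (hx : 0 < x) (n : ℕ) : sF^[n] x ≤ x / 8 ^ n := by
  induction n with
  | zero => simp
  | succ n ih =>
    rw [Function.iterate_succ_apply']
    calc sF (sF^[n] x) ≤ sF^[n] x / 8 := sF_le (sF_iter_pos hx n)
      _ ≤ x / 8 ^ n / 8 := by linarith
      _ = x / 8 ^ (n + 1) := by rw [pow_succ]; ring

lemma sFinv_iter_pos {x : ℝ} (hx : 0 < x) (n : ℕ) : 0 < sFinv^[n] x := by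
  induction n with
  | zero => simpa using hx
  | succ n ih => rw [Function.iterate_succ_apply']; exact sFinv_pos ih

lemma sFinv_iter_ge {x : ℝ} (hx : 0 < x) (n : ℕ) : 8 ^ n * x ≤ sFinv^[n] x := by
  induction n with
  | zero => simp
  | succ n ih =>
    rw [Function.iterate_succ_apply']
    calc (8:ℝ) ^ (n+1) * x = 8 * (8 ^ n * x) := by ring
      _ ≤ 8 * sFinv^[n] x := by linarith
      _ ≤ sFinv (sFinv^[n] x) := sFinv_ge (sFinv_iter_pos hx n)

lemma sIter_pos {x : ℝ} (hx : 0 < x) (i : ℤ) : 0 < sIter i x := by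
  rw [sIter]
  split
  · exact sF_iter_pos hx _
  · exact sFinv_iter_pos hx _

lemma sIter_shift {x : ℝ} (hx : 0 < x) (i : ℤ) : sIter i (sF x) = sIter (i + 1) x := by
  rcases i with n | n
  · rw [show (Int.ofNat n : ℤ) = (n : ℤ) from rfl, show ((n : ℤ) + 1) = ((n + 1 : ℕ) : ℤ) by push_cast; ring,
      sIter_natCast, sIter_natCast, Function.iterate_succ_apply]
  · rw [show (Int.negSucc n) = -((n + 1 : ℕ) : ℤ) by simp [Int.negSucc_eq],
      show (-((n + 1 : ℕ) : ℤ) + 1) = -((n : ℕ) : ℤ) by push_cast; ring,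
      sIter_neg, sIter_neg, Function.iterate_succ_apply, sFinv_sF hx]

lemma sIter_natCast_pos {x : ℝ} (hx : 0 < x) (i : ℕ) : 0 < sIter (i:ℤ) x := sIter_pos hx _

lemma fc_pos {x : ℝ} (hx : 0 < x) (j : ℕ) : 0 < fc x j :=
  Finset.prod_pos fun i _ => cF_sub_one_pos (sIter_pos hx _)
lemma fd_pos {x : ℝ} (hx : 0 < x) (j : ℕ) : 0 < fd x j :=
  Finset.prod_pos fun i _ => dF_sub_one_pos (sIter_pos hx _)
lemma gc_pos {x : ℝ} (hx : 0 < x) (j : ℕ) : 0 < gc x j :=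
  Finset.prod_pos fun i _ => inv_pos.2 (cF_sub_one_pos (sIter_pos hx _))
lemma gd_pos {x : ℝ} (hx : 0 < x) (j : ℕ) : 0 < gd x j :=
  Finset.prod_pos fun i _ => inv_pos.2 (dF_sub_one_pos (sIter_pos hx _))

lemma fc_succ (x : ℝ) (n : ℕ) : fc x (n + 1) = fc x n * (cF (sF^[n+1] x) - 1) := by
  rw [fc, fc, Finset.prod_range_succ, ← sIter_natCast]
lemma fd_succ (x : ℝ) (n : ℕ) : fd x (n + 1) = fd x n * (dF (sF^[n+1] x) - 1) := by
  rw [fd, fd, Finset.prod_range_succ, ← sIter_natCast]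
lemma gc_succ (x : ℝ) (n : ℕ) : gc x (n + 1) = gc x n * (cF (sFinv^[n+2] x) - 1)⁻¹ := by
  rw [gc, gc, Finset.prod_range_succ,
    show (-((((n+1):ℕ):ℤ)+1)) = -(((n+2:ℕ):ℤ)) by push_cast; ring, sIter_neg]
lemma gd_succ (x : ℝ) (n : ℕ) : gd x (n + 1) = gd x n * (dF (sFinv^[n+2] x) - 1)⁻¹ := by
  rw [gd, gd, Finset.prod_range_succ,
    show (-((((n+1):ℕ):ℤ)+1)) = -(((n+2:ℕ):ℤ)) by push_cast; ring, sIter_neg]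

lemma eventually_small {x : ℝ} (hx : 0 < x) : ∀ᶠ n in atTop, sF^[n+1] x ≤ 1/5 := by
  obtain ⟨N, hN⟩ := pow_unbounded_of_one_lt (5 * x) (show (1:ℝ) < 8 by norm_num)
  filter_upwards [eventually_ge_atTop N] with n hn
  have h8 : (8:ℝ) ^ N ≤ 8 ^ (n+1) := pow_le_pow_right₀ (by norm_num) (by omega)
  have hp : (0:ℝ) < 8 ^ N := by positivity
  have : x / 8 ^ (n+1) ≤ 1/5 := by
    rw [div_le_div_iff₀ (by positivity) (by norm_num)]
    nlinarith
  linarith [sF_iter_le hx (n+1)]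

lemma eventually_big {x : ℝ} (hx : 0 < x) : ∀ᶠ n in atTop, (45:ℝ) ≤ sFinv^[n+2] x := by
  obtain ⟨N, hN⟩ := pow_unbounded_of_one_lt (45 / x) (show (1:ℝ) < 8 by norm_num)
  filter_upwards [eventually_ge_atTop N] with n hn
  have h8 : (8:ℝ) ^ N ≤ 8 ^ (n+2) := pow_le_pow_right₀ (by norm_num) (by omega)
  have : (45:ℝ) ≤ 8 ^ (n+2) * x := by
    rw [div_lt_iff₀ hx] at hN
    nlinarith [pow_pos (show (0:ℝ) < 8 by norm_num) N]
  linarith [sFinv_iter_ge hx (n+2)]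

private lemma summable_aux {f : ℕ → ℝ} (hf : ∀ n, 0 < f n)
    (h : ∀ᶠ n in atTop, f (n+1) ≤ 1/2 * f n) : Summable f := by
  apply summable_of_ratio_norm_eventually_le (r := 1/2) (by norm_num)
  filter_upwards [h] with n hn
  rw [Real.norm_of_nonneg (hf _).le, Real.norm_of_nonneg (hf _).le]
  exact hn

lemma fc_summable {x : ℝ} (hx : 0 < x) : Summable (fc x) := by
  apply summable_aux (fc_pos hx)
  filter_upwards [eventually_small hx] with n hn
  rw [fc_succ]
  have h1 := sF_iter_pos hx (n+1)
  have := cF_le_half h1 hn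
  have := cF_sub_one_pos h1
  nlinarith [(fc_pos hx n)]

lemma fd_summable {x : ℝ} (hx : 0 < x) : Summable (fd x) := by
  apply summable_aux (fd_pos hx)
  filter_upwards [eventually_small hx] with n hn
  rw [fd_succ]
  have h1 := sF_iter_pos hx (n+1)
  have := dF_le_half h1 hn
  have := dF_sub_one_pos h1
  nlinarith [(fd_pos hx n)]

lemma gc_summable {x : ℝ} (hx : 0 < x) : Summable (gc x) := by
  apply summable_aux (gc_pos hx)
  filter_upwards [eventually_big hx] with n hn
  rw [gc_succ]
  have h1 := sFinv_iter_pos hx (n+2)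
  have h2 : 2 ≤ cF (sFinv^[n+2] x) - 1 := cF_ge_two (by linarith)
  have h3 : (cF (sFinv^[n+2] x) - 1)⁻¹ ≤ 1/2 := by
    rw [inv_le_comm₀ (by linarith) (by norm_num)]; simpa using h2
  nlinarith [(gc_pos hx n), inv_pos.2 (cF_sub_one_pos h1)]

lemma gd_summable {x : ℝ} (hx : 0 < x) : Summable (gd x) := by
  apply summable_aux (gd_pos hx)
  filter_upwards [eventually_big hx] with n hn
  rw [gd_succ]
  have h1 := sFinv_iter_pos hx (n+2)
  have h2 : 2 ≤ dF (sFinv^[n+2] x) - 1 := dF_ge_two (by linarith)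
  have h3 : (dF (sFinv^[n+2] x) - 1)⁻¹ ≤ 1/2 := by
    rw [inv_le_comm₀ (by linarith) (by norm_num)]; simpa using h2
  nlinarith [(gd_pos hx n), inv_pos.2 (dF_sub_one_pos h1)]

lemma Pfun_eq (x : ℝ) (k : ℕ) : Pfun x k = 1 + ∑ j ∈ Finset.range k, fc x j := by
  induction k with
  | zero => simp [Pfun]
  | succ k ih => rw [Pfun, ih, Finset.sum_range_succ]; rw [fc]; ring

lemma Sfun_eq (x : ℝ) (k : ℕ) : Sfun x k = 1 + ∑ j ∈ Finset.range k, fd x j := by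
  induction k with
  | zero => simp [Sfun]
  | succ k ih => rw [Sfun, ih, Finset.sum_range_succ]; rw [fd]; ring

lemma Qfun_eq (x : ℝ) (k : ℕ) : Qfun x (k + 1) = ∑ j ∈ Finset.range k, gc x j := by
  induction k with
  | zero => simp [Qfun]
  | succ k ih => rw [Qfun, ih, Finset.sum_range_succ]; rw [gc]

lemma Tfun_eq (x : ℝ) (k : ℕ) : Tfun x (k + 1) = ∑ j ∈ Finset.range k, gd x j := by
  induction k with
  | zero => simp [Tfun]
  | succ k ih => rw [Tfun, ih, Finset.sum_range_succ]; rw [gd]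

lemma Pfun_tendsto {x : ℝ} (hx : 0 < x) :
    Tendsto (Pfun x) atTop (nhds (1 + ∑' j, fc x j)) := by
  have := ((fc_summable hx).hasSum.tendsto_sum_nat).const_add 1
  exact this.congr fun k => (Pfun_eq x k).symm

lemma Sfun_tendsto {x : ℝ} (hx : 0 < x) :
    Tendsto (Sfun x) atTop (nhds (1 + ∑' j, fd x j)) := by
  have := ((fd_summable hx).hasSum.tendsto_sum_nat).const_add 1
  exact this.congr fun k => (Sfun_eq x k).symm

lemma Qfun_tendsto {x : ℝ} (hx : 0 < x) :
    Tendsto (Qfun x) atTop (nhds (∑' j, gc x j)) := by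
  rw [← tendsto_add_atTop_iff_nat 1]
  exact (gc_summable hx).hasSum.tendsto_sum_nat.congr fun k => (Qfun_eq x k).symm

lemma Tfun_tendsto {x : ℝ} (hx : 0 < x) :
    Tendsto (Tfun x) atTop (nhds (∑' j, gd x j)) := by
  rw [← tendsto_add_atTop_iff_nat 1]
  exact (gd_summable hx).hasSum.tendsto_sum_nat.congr fun k => (Tfun_eq x k).symm

lemma Pfun_ge_one {x : ℝ} (hx : 0 < x) (k : ℕ) : 1 ≤ Pfun x k := by
  rw [Pfun_eq]
  have : 0 ≤ ∑ j ∈ Finset.range k, fc x j :=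
    Finset.sum_nonneg fun j _ => (fc_pos hx j).le
  linarith

lemma Qfun_nonneg {x : ℝ} (hx : 0 < x) (k : ℕ) : 0 ≤ Qfun x k := by
  rcases k with _ | k
  · simp [Qfun]
  · rw [Qfun_eq]; exact Finset.sum_nonneg fun j _ => (gc_pos hx j).le

lemma fc_zero (x : ℝ) : fc x 0 = cF x - 1 := by
  rw [fc, Finset.prod_range_one]; simp [sIter]

lemma fd_zero (x : ℝ) : fd x 0 = dF x - 1 := by
  rw [fd, Finset.prod_range_one]; simp [sIter]

lemma sIter_zero (x : ℝ) : sIter 0 x = x := by simp [sIter]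

lemma fc_shift {x : ℝ} (hx : 0 < x) (j : ℕ) : fc x (j + 1) = fc (sF x) j * (cF x - 1) := by
  rw [fc, fc, Finset.prod_range_succ']
  congr 1
  all_goals first
    | exact Finset.prod_congr rfl fun i _ => by
        rw [show (((i + 1 : ℕ)) : ℤ) = (i : ℤ) + 1 by push_cast; ring, ← sIter_shift hx]
    | rw [show ((0 : ℕ) : ℤ) = 0 by norm_num, sIter_zero]

lemma fd_shift {x : ℝ} (hx : 0 < x) (j : ℕ) : fd x (j + 1) = fd (sF x) j * (dF x - 1) := by
  rw [fd, fd, Finset.prod_range_succ']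
  congr 1
  all_goals first
    | exact Finset.prod_congr rfl fun i _ => by
        rw [show (((i + 1 : ℕ)) : ℤ) = (i : ℤ) + 1 by push_cast; ring, ← sIter_shift hx]
    | rw [show ((0 : ℕ) : ℤ) = 0 by norm_num, sIter_zero]

lemma gc_zero_shift {x : ℝ} (hx : 0 < x) : gc (sF x) 0 = (cF x - 1)⁻¹ := by
  rw [gc, Finset.prod_range_one, show (-(((0:ℕ) : ℤ) + 1)) = (-1 : ℤ) by norm_num,
    sIter_shift hx, show (-1 + 1 : ℤ) = 0 by norm_num, sIter_zero]

lemma gd_zero_shift {x : ℝ} (hx : 0 < x) : gd (sF x) 0 = (dF x - 1)⁻¹ := by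
  rw [gd, Finset.prod_range_one, show (-(((0:ℕ) : ℤ) + 1)) = (-1 : ℤ) by norm_num,
    sIter_shift hx, show (-1 + 1 : ℤ) = 0 by norm_num, sIter_zero]

lemma gc_shift {x : ℝ} (hx : 0 < x) (j : ℕ) :
    gc (sF x) (j + 1) = gc x j * (cF x - 1)⁻¹ := by
  rw [gc, gc, Finset.prod_range_succ']
  rw [show (-(((0:ℕ) : ℤ) + 1)) = (-1 : ℤ) by norm_num, sIter_shift hx,
    show (-1 + 1 : ℤ) = 0 by norm_num, sIter_zero]
  congr 1
  exact Finset.prod_congr rfl fun i _ => by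
    rw [show (-((((i + 1 : ℕ)) : ℤ) + 1)) = -((i : ℤ) + 2) by push_cast; ring,
      sIter_shift hx, show (-((i : ℤ) + 2) + 1) = -((i : ℤ) + 1) by ring]

lemma gd_shift {x : ℝ} (hx : 0 < x) (j : ℕ) :
    gd (sF x) (j + 1) = gd x j * (dF x - 1)⁻¹ := by
  rw [gd, gd, Finset.prod_range_succ']
  rw [show (-(((0:ℕ) : ℤ) + 1)) = (-1 : ℤ) by norm_num, sIter_shift hx,
    show (-1 + 1 : ℤ) = 0 by norm_num, sIter_zero]
  congr 1
  exact Finset.prod_congr rfl fun i _ => by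
    rw [show (-((((i + 1 : ℕ)) : ℤ) + 1)) = -((i : ℤ) + 2) by push_cast; ring,
      sIter_shift hx, show (-((i : ℤ) + 2) + 1) = -((i : ℤ) + 1) by ring]

lemma P_shift {x : ℝ} (hx : 0 < x) (k : ℕ) :
    Pfun x (k + 1) = 1 + (cF x - 1) + (Pfun (sF x) k - 1) * (cF x - 1) := by
  rw [Pfun_eq x, Pfun_eq (sF x), Finset.sum_range_succ', fc_zero]
  rw [Finset.sum_congr rfl fun i _ => fc_shift hx i, ← Finset.sum_mul]
  ring

lemma S_shift {x : ℝ} (hx : 0 < x) (k : ℕ) :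
    Sfun x (k + 1) = 1 + (dF x - 1) + (Sfun (sF x) k - 1) * (dF x - 1) := by
  rw [Sfun_eq x, Sfun_eq (sF x), Finset.sum_range_succ', fd_zero]
  rw [Finset.sum_congr rfl fun i _ => fd_shift hx i, ← Finset.sum_mul]
  ring

lemma Q_shift {x : ℝ} (hx : 0 < x) (k : ℕ) :
    Qfun (sF x) (k + 2) = (1 + Qfun x (k + 1)) * (cF x - 1)⁻¹ := by
  rw [Qfun_eq, Qfun_eq, Finset.sum_range_succ', gc_zero_shift hx]
  rw [Finset.sum_congr rfl fun i _ => gc_shift hx i, ← Finset.sum_mul]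
  ring

lemma T_shift {x : ℝ} (hx : 0 < x) (k : ℕ) :
    Tfun (sF x) (k + 2) = (1 + Tfun x (k + 1)) * (dF x - 1)⁻¹ := by
  rw [Tfun_eq, Tfun_eq, Finset.sum_range_succ', gd_zero_shift hx]
  rw [Finset.sum_congr rfl fun i _ => gd_shift hx i, ← Finset.sum_mul]
  ring

lemma den_shift {x : ℝ} (hx : 0 < x) (m : ℕ) :
    Pfun (sF x) (m + 2) + Qfun (sF x) (m + 2)
      = (Pfun x (m + 3) + Qfun x (m + 1)) * (cF x - 1)⁻¹ := by
  have hc := (cF_sub_one_pos hx).ne'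
  have hP := P_shift hx (m + 2)
  rw [show m + 2 + 1 = m + 3 from rfl] at hP
  have hQ : Qfun (sF x) (m + 2) * (cF x - 1) = 1 + Qfun x (m + 1) := by
    rw [Q_shift hx m, inv_mul_cancel_right₀ hc]
  rw [← div_eq_mul_inv, eq_div_iff hc]
  linear_combination hQ - hP

lemma num_shift {x : ℝ} (hx : 0 < x) (m : ℕ) :
    Sfun (sF x) (m + 2) + Tfun (sF x) (m + 2)
      = (Sfun x (m + 3) + Tfun x (m + 1)) * (dF x - 1)⁻¹ := by
  have hc := (dF_sub_one_pos hx).ne'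
  have hP := S_shift hx (m + 2)
  rw [show m + 2 + 1 = m + 3 from rfl] at hP
  have hQ : Tfun (sF x) (m + 2) * (dF x - 1) = 1 + Tfun x (m + 1) := by
    rw [T_shift hx m, inv_mul_cancel_right₀ hc]
  rw [← div_eq_mul_inv, eq_div_iff hc]
  linear_combination hQ - hP

lemma key_cd {x : ℝ} (hx : 0 < x) : sF x * (cF x - 1) = x * (dF x - 1) := by
  have h : 0 < wF x - 1 := by linarith [wF_gt hx]
  have hs := wF_sq hx
  rw [cF_sub_one, dF_sub_one hx, sF]
  set w := wF x with hw
  have hx' : x = (w ^ 2 - 1) / 8 := by linarith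
  have h7 : w + 7 ≠ 0 := by nlinarith
  have h1 : w + 1 ≠ 0 := by nlinarith
  rw [hx']
  field_simp
  ring

lemma Mfin_shift {x : ℝ} (hx : 0 < x) (m : ℕ) :
    Mfin (m + 2) (m + 2) (sF x) = Mfin (m + 1) (m + 3) x := by
  have hc := cF_sub_one_pos hx
  have hd := dF_sub_one_pos hx
  have hB : 0 < Pfun x (m + 3) + Qfun x (m + 1) := by
    linarith [Pfun_ge_one hx (m + 3), Qfun_nonneg hx (m + 1)]
  rw [Mfin, Mfin, den_shift hx m, num_shift hx m,
    div_eq_div_iff (mul_pos hB (inv_pos.2 hc)).ne' hB.ne']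
  have hk := key_cd hx
  field_simp
  linear_combination (Sfun x (m + 3) + Tfun x (m + 1)) * hk


/-- The Mina margin map: for every `x > 0` the limit `M(x) = lim_k M_{k,k}(x)` exists
as a positive real, and `M(s(x)) = M(x)`. -/
theorem mina_margin_limit_s_invariant (x : ℝ) (hx : 0 < x) :
    ∃ L : ℝ, 0 < L ∧
      Filter.Tendsto (fun k : ℕ => Mfin k k x) Filter.atTop (nhds L) ∧
      Filter.Tendsto (fun k : ℕ => Mfin k k (sF x)) Filter.atTop (nhds L) := by
  set PL : ℝ := 1 + ∑' j, fc x j with hPL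
  set QL : ℝ := ∑' j, gc x j with hQL
  set SL : ℝ := 1 + ∑' j, fd x j with hSL
  set TL : ℝ := ∑' j, gd x j with hTL
  have hP1 : 1 ≤ PL := le_add_of_nonneg_right (tsum_nonneg fun j => (fc_pos hx j).le)
  have hQ0 : 0 ≤ QL := tsum_nonneg fun j => (gc_pos hx j).le
  have hS1 : 1 ≤ SL := le_add_of_nonneg_right (tsum_nonneg fun j => (fd_pos hx j).le)
  have hT0 : 0 ≤ TL := tsum_nonneg fun j => (gd_pos hx j).le
  have hden : 0 < PL + QL := by linarith
  have hnum : 0 < SL + TL := by linarith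
  refine ⟨x * (SL + TL) / (PL + QL), by positivity, ?_, ?_⟩
  · have h := (((Sfun_tendsto hx).add (Tfun_tendsto hx)).const_mul x).div
      ((Pfun_tendsto hx).add (Qfun_tendsto hx)) hden.ne'
    exact h.congr fun k => by simp [Mfin]
  · have h1 : Filter.Tendsto (fun k : ℕ => Sfun x (k + 1)) Filter.atTop (nhds SL) :=
      (Sfun_tendsto hx).comp (Filter.tendsto_add_atTop_nat 1)
    have h2 : Filter.Tendsto (fun k : ℕ => Tfun x (k - 1)) Filter.atTop (nhds TL) :=
      (Tfun_tendsto hx).comp (Filter.tendsto_sub_atTop_nat 1)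
    have h3 : Filter.Tendsto (fun k : ℕ => Pfun x (k + 1)) Filter.atTop (nhds PL) :=
      (Pfun_tendsto hx).comp (Filter.tendsto_add_atTop_nat 1)
    have h4 : Filter.Tendsto (fun k : ℕ => Qfun x (k - 1)) Filter.atTop (nhds QL) :=
      (Qfun_tendsto hx).comp (Filter.tendsto_sub_atTop_nat 1)
    have h : Filter.Tendsto (fun k : ℕ => Mfin (k - 1) (k + 1) x) Filter.atTop
        (nhds (x * (SL + TL) / (PL + QL))) := by
      have := (((h1.add h2)).const_mul x).div (h3.add h4) hden.ne'
      exact this.congr fun k => by simp [Mfin]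
    refine h.congr' ?_
    filter_upwards [Filter.eventually_ge_atTop 2] with k hk
    obtain ⟨m, rfl⟩ : ∃ m, k = m + 2 := ⟨k - 2, by omega⟩
    rw [show m + 2 - 1 = m + 1 from rfl, show m + 2 + 1 = m + 3 from rfl,
      Mfin_shift hx m]
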